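/- For every integer k ≥ 1, the sequence a_n = f_{2^k,n}(-1) satisfies Δ^{2^k} a_n = -a_n for all n ≥ 0. -/

import Mathlib

open Finset

lemma choose_two_pow_mod (k j : ℕ) : (j.choose (2^k)) % 2 = (j / 2^k) % 2 := by
  haveI : Fact (Nat.Prime 2) := ⟨Nat.prime_two⟩
  have h := Choose.choose_modEq_choose_mul_prod_range_choose (n := j) (k := 2^k) (p := 2) k
  have h2 : ∀ i ∈ Finset.range k, ((2:ℕ)^k / 2^i % 2) = 0 := by
    intro i hi
    rw [Finset.mem_range] at hi
    rw [Nat.pow_div hi.le (by norm_num)]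
    rw [Nat.pow_mod]; norm_num [Nat.zero_pow (show 0 < k - i by omega)]
  have h3 : ∏ i ∈ Finset.range k, Nat.choose (j / 2^i % 2) (2^k / 2^i % 2) = 1 := by
    apply Finset.prod_eq_one
    intro i hi
    rw [h2 i hi, Nat.choose_zero_right]
  rw [Nat.div_self (Nat.two_pow_pos k), Nat.choose_one_right] at h
  have h' : j.choose (2^k) ≡ (j / 2^k) * ∏ i ∈ Finset.range k,
      Nat.choose (j / 2^i % 2) (2^k / 2^i % 2) [MOD 2] := by
    rw [← Int.natCast_modEq_iff]
    exact_mod_cast h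
  rw [h3, mul_one] at h'
  exact h'

lemma sign_flip (k j : ℕ) : (-1:ℤ)^((j + 2^k).choose (2^k)) = -(-1:ℤ)^(j.choose (2^k)) := by
  rw [neg_one_pow_eq_pow_mod_two, neg_one_pow_eq_pow_mod_two (n := j.choose (2^k)),
    choose_two_pow_mod, choose_two_pow_mod,
    Nat.add_div_right _ (Nat.two_pow_pos k)]
  rcases Nat.mod_two_eq_zero_or_one (j / 2^k) with h | h <;>
    rw [h] <;> simp [Nat.add_mod, h]

lemma shift (c : ℕ → ℤ) (n : ℕ) :
    ∑ j ∈ Finset.range (n+2), ((n+1).choose j : ℤ) * c j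
      = ∑ j ∈ Finset.range (n+1), (n.choose j : ℤ) * c j
        + ∑ j ∈ Finset.range (n+1), (n.choose j : ℤ) * c (j+1) := by
  rw [Finset.sum_range_succ' _ (n+1)]
  simp only [Nat.choose_succ_succ]
  push_cast
  simp only [add_mul]
  rw [Finset.sum_add_distrib]
  have h : ∑ j ∈ Finset.range (n+1), (n.choose (j+1) : ℤ) * c (j+1)
      + (n.choose 0 : ℤ) * c 0 = ∑ j ∈ Finset.range (n+1), (n.choose j : ℤ) * c j := by
    rw [← Finset.sum_range_succ' (fun j => (n.choose j : ℤ) * c j) (n+1),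
      Finset.sum_range_succ]
    simp
  simp only [Nat.choose_zero_right, Nat.cast_one, one_mul] at h ⊢
  linarith

def Tsum (b : ℕ → ℤ) (m : ℕ) : ℤ := ∑ j ∈ Finset.range (m+1), (m.choose j : ℤ) * b j

lemma key (b : ℕ → ℤ) (r : ℕ) : ∀ n : ℕ,
    ∑ ν ∈ Finset.range (r+1), (-1:ℤ)^ν * (r.choose ν : ℤ) * Tsum b (n + r - ν)
      = ∑ j ∈ Finset.range (n+1), (n.choose j : ℤ) * b (j + r) := by
  induction r with
  | zero => intro n; simp [Tsum]
  | succ r IH =>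
    intro n
    rw [Finset.sum_range_succ']
    have e1 : ∀ ν : ℕ, n + (r+1) - (ν+1) = n + r - ν := by intro ν; omega
    simp only [e1]
    have expand : ∀ ν : ℕ, ((-1:ℤ))^(ν+1) * (((r+1).choose (ν+1) : ℕ) : ℤ) * Tsum b (n+r-ν)
        = -((-1:ℤ)^ν * (r.choose ν : ℤ) * Tsum b (n+r-ν))
          + -((-1:ℤ)^ν * (r.choose (ν+1) : ℤ) * Tsum b (n+r-ν)) := by
      intro ν
      rw [Nat.choose_succ_succ]
      push_cast
      ring
    simp only [expand]
    rw [Finset.sum_add_distrib, Finset.sum_neg_distrib, Finset.sum_neg_distrib]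
    have h2 : ∑ ν ∈ Finset.range (r+1), (-1:ℤ)^ν * (r.choose (ν+1) : ℤ) * Tsum b (n+r-ν)
        = Tsum b (n+1+r)
          - ∑ ν ∈ Finset.range (r+1), (-1:ℤ)^ν * (r.choose ν : ℤ) * Tsum b ((n+1) + r - ν) := by
      rw [Finset.sum_range_succ]
      rw [Finset.sum_range_succ' (fun ν => (-1:ℤ)^ν * (r.choose ν : ℤ) * Tsum b ((n+1) + r - ν)) r]
      have e3 : ∀ ν : ℕ, (n+1) + r - (ν+1) = n + r - ν := by intro ν; omega
      simp only [e3, Nat.choose_succ_self, Nat.cast_zero, Nat.sub_zero, Nat.add_sub_cancel]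
      have e5 : ∑ ν ∈ Finset.range r, (-1:ℤ)^(ν+1) * (r.choose (ν+1) : ℤ) * Tsum b (n+r-ν)
          = -∑ ν ∈ Finset.range r, (-1:ℤ)^ν * (r.choose (ν+1) : ℤ) * Tsum b (n+r-ν) := by
        rw [← Finset.sum_neg_distrib]
        exact Finset.sum_congr rfl fun ν _ => by ring
      rw [e5]
      simp only [Nat.choose_zero_right, Nat.cast_one]
      ring
    rw [h2, IH n, IH (n+1)]
    have e7 : n + (r+1) - 0 = n + 1 + r := by omega
    rw [e7]
    have e8 : ∑ j ∈ Finset.range (n+1+1), ((n+1).choose j : ℤ) * b (j + r)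
        = ∑ j ∈ Finset.range (n+1), (n.choose j : ℤ) * b (j + r)
          + ∑ j ∈ Finset.range (n+1), (n.choose j : ℤ) * b (j + (r+1)) := by
      rw [shift (fun j => b (j + r)) n]
      congr 1
      exact Finset.sum_congr rfl fun j _ => by rw [show j + 1 + r = j + (r+1) by omega]
    rw [e8]
    simp only [Nat.choose_zero_right, Nat.cast_one]
    ring

theorem stmt_9 (k : ℕ) (hk : 1 ≤ k) (n : ℕ) :
    (∑ ν ∈ Finset.range (2 ^ k + 1), (-1 : ℤ) ^ ν * ((2 ^ k).choose ν : ℤ) *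
        (∑ j ∈ Finset.range (n + 2 ^ k - ν + 1),
          ((n + 2 ^ k - ν).choose j : ℤ) * (-1 : ℤ) ^ (j.choose (2 ^ k))))
      = -(∑ j ∈ Finset.range (n + 1), (n.choose j : ℤ) * (-1 : ℤ) ^ (j.choose (2 ^ k))) := by
  have h := key (fun j => (-1:ℤ)^(j.choose (2^k))) (2^k) n
  simp only [Tsum] at h
  rw [h, ← Finset.sum_neg_distrib]
  exact Finset.sum_congr rfl fun j _ => by rw [sign_flip]; ring
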